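/- Let σ : K → V be an injective R-linear map between finite free R-modules, let L := V/σ(K), and let E := coker(σ^∨ : V^∨ → K^∨). Then the support of E equals the non-free locus of L: Supp(E) = { p ∈ Spec R : the localization L_p is not a free R_p-module }. (Here Supp(E) is the set of primes p with E_p ≠ 0.) -/

import Mathlib

open Module LinearMap

lemma aux_local {A K V : Type*} [CommRing A] [IsLocalRing A]
    [AddCommGroup K] [Module A K] [AddCommGroup V] [Module A V]
    [Module.Free A K] [Module.Finite A K] [Module.Free A V] [Module.Finite A V]
    (σ : K →ₗ[A] V) (hσ : Function.Injective σ) :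
    Function.Surjective σ.dualMap ↔ Module.Free A (V ⧸ LinearMap.range σ) := by
  constructor
  · intro h
    obtain ⟨s, hs⟩ := Module.projective_lifting_property σ.dualMap LinearMap.id h
    let r : V →ₗ[A] K := (evalEquiv A K).symm.toLinearMap ∘ₗ s.dualMap ∘ₗ (evalEquiv A V).toLinearMap
    have hr : ∀ k, r (σ k) = k := by
      intro k
      have h2 : s.dualMap (evalEquiv A V (σ k)) = evalEquiv A K k := by
        ext φ
        have := LinearMap.congr_fun hs φ
        simp only [LinearMap.dualMap_apply, evalEquiv_apply, Dual.eval_apply, LinearMap.comp_apply,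
          LinearMap.id_apply] at *
        calc (s φ) (σ k) = (σ.dualMap (s φ)) k := rfl
          _ = φ k := by rw [this]
      show (evalEquiv A K).symm (s.dualMap (evalEquiv A V (σ k))) = k
      rw [h2, LinearEquiv.symm_apply_apply]
    set π := (LinearMap.range σ).mkQ with hπ
    set q : V →ₗ[A] V := LinearMap.id - σ ∘ₗ r with hq
    have hle : LinearMap.range σ ≤ LinearMap.ker q := by
      rintro x ⟨k, rfl⟩
      simp [hq, LinearMap.sub_apply, hr]
    let g : (V ⧸ LinearMap.range σ) →ₗ[A] V := (LinearMap.range σ).liftQ q hle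
    have hsplit : π ∘ₗ g = LinearMap.id := by
      refine Submodule.linearMap_qext _ ?_
      ext x
      show π (q x) = Submodule.Quotient.mk x
      have : π (σ (r x)) = 0 := by
        simp [hπ, Submodule.Quotient.mk_eq_zero]
      simp only [hq, LinearMap.sub_apply, LinearMap.id_apply, LinearMap.comp_apply, map_sub, this,
        sub_zero]
      rfl
    have : Module.Projective A (V ⧸ LinearMap.range σ) :=
      Module.Projective.of_split g π hsplit
    have : Module.FinitePresentation A (V ⧸ LinearMap.range σ) :=
      Module.finitePresentation_of_projective _ _
    exact Module.free_of_flat_of_isLocalRing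
  · intro h
    set π := (LinearMap.range σ).mkQ with hπ
    obtain ⟨s, hs⟩ := Module.projective_lifting_property π LinearMap.id
      (Submodule.mkQ_surjective _)
    set q : V →ₗ[A] V := LinearMap.id - s ∘ₗ π with hq
    have hker : ∀ v : V, q v ∈ LinearMap.range σ := by
      intro v
      rw [← Submodule.Quotient.mk_eq_zero]
      have : Submodule.Quotient.mk (p := LinearMap.range σ) (s (π v)) = π v := by
        have := LinearMap.congr_fun hs (π v)
        simpa [hπ] using this
      simp only [hq, LinearMap.sub_apply, LinearMap.id_apply, LinearMap.comp_apply]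
      rw [Submodule.Quotient.mk_sub, this]
      simp [hπ]
    let e := LinearEquiv.ofInjective σ hσ
    let r : V →ₗ[A] K := e.symm.toLinearMap ∘ₗ q.codRestrict _ hker
    have hr : ∀ k, r (σ k) = k := by
      intro k
      have h1 : q (σ k) = σ k := by
        have : π (σ k) = 0 := by simp [hπ, Submodule.Quotient.mk_eq_zero]
        simp [hq, LinearMap.sub_apply, this]
      have : q.codRestrict _ hker (σ k) = e k := by
        apply Subtype.ext
        simpa [e, LinearEquiv.ofInjective_apply] using h1
      simp [r, this]
    intro φ
    refine ⟨φ ∘ₗ r, ?_⟩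
    ext k
    simp [LinearMap.dualMap_apply, hr]



/-- Let `σ : K → V` be an injective `R`-linear map between finite free
`R`-modules, `L := V/σ(K)`, and `E := coker(σ^∨ : V^∨ → K^∨)`. Then the support of `E`
(the set of primes `p` with `E_p ≠ 0`) equals the non-free locus of `L`:
`Supp(E) = { p ∈ Spec R : L_p is not a free R_p-module }`. -/
theorem support_cokernel_dual_eq_nonfree_locus
    {R : Type} [CommRing R]
    {K V : Type} [AddCommGroup K] [Module R K] [AddCommGroup V] [Module R V]
    [Module.Free R K] [Module.Finite R K] [Module.Free R V] [Module.Finite R V]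
    (σ : K →ₗ[R] V) (hσ : Function.Injective σ) :
    Module.support R ((Module.Dual R K) ⧸ LinearMap.range σ.dualMap) =
      { p : PrimeSpectrum R |
        ¬ Module.Free (Localization.AtPrime p.asIdeal)
            (LocalizedModule p.asIdeal.primeCompl (V ⧸ LinearMap.range σ)) } := by
  ext p
  simp only [Module.mem_support_iff, Set.mem_setOf_eq]
  set S := p.asIdeal.primeCompl with hS
  letI A := Localization.AtPrime p.asIdeal
  haveI : Module.FinitePresentation R K := Module.finitePresentation_of_projective R K
  haveI : Module.FinitePresentation R V := Module.finitePresentation_of_projective R V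
  let fK := LocalizedModule.mkLinearMap S K
  let fV := LocalizedModule.mkLinearMap S V
  let σ' : LocalizedModule S K →ₗ[A] LocalizedModule S V := LocalizedModule.map S σ
  haveI : Module.Finite A (LocalizedModule S K) := Module.Finite.of_isLocalizedModule S fK
  haveI : Module.Finite A (LocalizedModule S V) := Module.Finite.of_isLocalizedModule S fV
  haveI : Module.Free A (LocalizedModule S K) := Module.free_of_isLocalizedModule S fK
  haveI : Module.Free A (LocalizedModule S V) := Module.free_of_isLocalizedModule S fV
  have hσ' : Function.Injective σ' := LocalizedModule.map_injective S σ hσ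
  -- dual localization maps
  let gK : Module.Dual R K →ₗ[R] Module.Dual A (LocalizedModule S K) :=
    IsLocalizedModule.mapExtendScalars S fK (Algebra.linearMap R A) A
  let gV : Module.Dual R V →ₗ[R] Module.Dual A (LocalizedModule S V) :=
    IsLocalizedModule.mapExtendScalars S fV (Algebra.linearMap R A) A
  let D := IsLocalizedModule.map S gV gK σ.dualMap
  have hD : ∀ x, D x = σ'.dualMap x := by
    suffices h : D = (σ'.dualMap).restrictScalars R by
      intro x; rw [h]; rfl
    apply IsLocalizedModule.ext S gV (IsLocalizedModule.map_units gK)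
    rw [IsLocalizedModule.map_comp]
    refine LinearMap.ext fun φ => ?_
    show gK (σ.dualMap φ) = σ'.dualMap (gV φ)
    apply LinearMap.restrictScalars_injective R
    apply IsLocalizedModule.ext S fK
      (IsLocalizedModule.map_units (Algebra.linearMap R A))
    ext x
    show gK (σ.dualMap φ) (fK x) = (gV φ) (σ' (fK x))
    have h1 : σ' (fK x) = fV (σ x) := LocalizedModule.map_mk S σ x 1
    rw [h1]
    simp [gK, gV, LinearMap.dualMap_apply]
  -- exact sequence
  let Q := (Module.Dual R K) ⧸ LinearMap.range σ.dualMap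
  let fQ := LocalizedModule.mkLinearMap S Q
  let P := IsLocalizedModule.map S gK fQ (LinearMap.range σ.dualMap).mkQ
  have hex : Function.Exact D P :=
    IsLocalizedModule.map_exact S gV gK fQ σ.dualMap _ σ.dualMap.exact_map_mkQ_range
  have hPsurj : Function.Surjective P :=
    IsLocalizedModule.map_surjective S gK fQ _ (Submodule.mkQ_surjective _)
  have key : Nontrivial (LocalizedModule S Q) ↔ ¬ Function.Surjective σ'.dualMap := by
    rw [← not_subsingleton_iff_nontrivial, not_iff_not]
    constructor
    · intro h
      intro ψ
      have hall : ∀ y, P y = 0 := fun y => Subsingleton.elim _ _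
      obtain ⟨x, hx⟩ := (hex ψ).mp (hall ψ)
      exact ⟨x, (hD x).symm.trans hx⟩
    · intro h
      have hD' : Function.Surjective D := by
        intro y
        obtain ⟨x, hx⟩ := h y
        exact ⟨x, (hD x).trans hx⟩
      refine subsingleton_of_forall_eq 0 fun z => ?_
      obtain ⟨y, rfl⟩ := hPsurj z
      obtain ⟨x, rfl⟩ := hD' y
      exact (hex _).mpr ⟨x, rfl⟩
  -- RHS
  have hrange : (LinearMap.range σ).localized S = LinearMap.range σ' :=
    fK.localized'_range_eq_range_localizedMap (Localization S) S fV σ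
  let eQuot : LocalizedModule S (V ⧸ LinearMap.range σ) ≃ₗ[R]
      (LocalizedModule S V ⧸ (LinearMap.range σ).localized S) :=
    IsLocalizedModule.linearEquiv S (LocalizedModule.mkLinearMap S (V ⧸ LinearMap.range σ))
      ((LinearMap.range σ).toLocalizedQuotient S)
  let eQuot' : LocalizedModule S (V ⧸ LinearMap.range σ) ≃ₗ[A]
      (LocalizedModule S V ⧸ (LinearMap.range σ).localized S) :=
    LinearEquiv.ofLinear (eQuot.toLinearMap.extendScalarsOfIsLocalization S A)
      (eQuot.symm.toLinearMap.extendScalarsOfIsLocalization S A)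
      (by ext x; simp) (by ext x; simp)
  let eQuot'' : LocalizedModule S (V ⧸ LinearMap.range σ) ≃ₗ[A]
      (LocalizedModule S V ⧸ LinearMap.range σ') :=
    eQuot'.trans (Submodule.quotEquivOfEq _ _ hrange)
  have hfree : Module.Free A (LocalizedModule S (V ⧸ LinearMap.range σ)) ↔
      Module.Free A (LocalizedModule S V ⧸ LinearMap.range σ') :=
    ⟨fun h => Module.Free.of_equiv eQuot'', fun h => Module.Free.of_equiv eQuot''.symm⟩
  rw [key, hfree, aux_local σ' hσ']
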